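/- Define, for u, u' ∈ H[[s]], the s-shifted shuffle product u ⧢_s u' := (1−e₀s)·(u ⧢ (1−e₀s)^{−1}·u'), where ⧢ is extended to H[[s]] coefficientwise. Then for all u, v, w ∈ H[[s]] one has (u ⧢ v) ⧢_s w = u ⧢_s (v ⧢_s w). -/

import Mathlib

noncomputable section

abbrev H : Type := FreeAlgebra ℚ (Fin 2)

def e0 : H := FreeAlgebra.ι ℚ 0
def e1 : H := FreeAlgebra.ι ℚ 1

/-- The word `e_{a₁}⋯e_{a_N}` of a list of letters. -/
def word (l : List (Fin 2)) : H := (l.map (FreeAlgebra.ι ℚ)).prod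

/-- The coefficientwise (Cauchy) extension of a bilinear product on `H` to `H[[s]]`. -/
def extPS (sh : H →ₗ[ℚ] H →ₗ[ℚ] H) (f g : PowerSeries H) : PowerSeries H :=
  PowerSeries.mk fun n => ∑ p ∈ Finset.HasAntidiagonal.antidiagonal n,
    sh (PowerSeries.coeff p.1 f) (PowerSeries.coeff p.2 g)

/-- `(1 - e₀ s)⁻¹ = ∑_n e₀ⁿ sⁿ`. -/
def geomE0 : PowerSeries H := PowerSeries.mk fun n => e0 ^ n

/-- The s-shifted shuffle product `u ⧢_s u' = (1-e₀s)(u ⧢ (1-e₀s)⁻¹ u')`. -/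
def shiftSh (sh : H →ₗ[ℚ] H →ₗ[ℚ] H) (u u' : PowerSeries H) : PowerSeries H :=
  (1 - PowerSeries.C e0 * PowerSeries.X) * extPS sh u (geomE0 * u')

-- auxiliary lemmas

lemma word_nil : word [] = 1 := rfl

lemma word_append (l l' : List (Fin 2)) : word (l ++ l') = word l * word l' := by
  simp [word]

lemma word_concat (l : List (Fin 2)) (i : Fin 2) :
    word (l ++ [i]) = word l * FreeAlgebra.ι ℚ i := by
  simp [word]

lemma mem_span_words (x : H) : x ∈ Submodule.span ℚ (Set.range word) := by
  induction x using FreeAlgebra.induction with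
  | grade0 r =>
    have h : (algebraMap ℚ H) r = r • word [] := by
      simp [word_nil, Algebra.algebraMap_eq_smul_one]
    rw [h]
    exact Submodule.smul_mem _ _ (Submodule.subset_span ⟨[], rfl⟩)
  | grade1 i =>
    have h : FreeAlgebra.ι ℚ i = word [i] := by simp [word]
    rw [h]; exact Submodule.subset_span ⟨[i], rfl⟩
  | mul a b ha hb =>
    have h : Submodule.span ℚ (Set.range word) * Submodule.span ℚ (Set.range word)
        ≤ Submodule.span ℚ (Set.range word) := by
      rw [Submodule.span_mul_span]
      apply Submodule.span_mono
      rintro _ ⟨_, ⟨l, rfl⟩, _, ⟨l', rfl⟩, rfl⟩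
      exact ⟨l ++ l', by simpa using word_append l l'⟩
    exact h (Submodule.mul_mem_mul ha hb)
  | add a b ha hb => exact Submodule.add_mem _ ha hb

section sh
variable (sh : H →ₗ[ℚ] H →ₗ[ℚ] H)

lemma sh_one_right (hOneR : ∀ l : List (Fin 2), sh (word l) (word []) = word l) :
    ∀ x : H, sh x 1 = x := by
  intro x
  induction mem_span_words x using Submodule.span_induction with
  | mem t ht => obtain ⟨l, rfl⟩ := ht; simpa [word_nil] using hOneR l
  | zero => simp
  | add a b _ _ ha hb => simp [map_add, LinearMap.add_apply, ha, hb]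
  | smul r a _ ha => simp [map_smul, LinearMap.smul_apply, ha]

lemma sh_one_left (hOneL : ∀ l : List (Fin 2), sh (word []) (word l) = word l) :
    ∀ x : H, sh 1 x = x := by
  intro x
  induction mem_span_words x using Submodule.span_induction with
  | mem t ht => obtain ⟨l, rfl⟩ := ht; simpa [word_nil] using hOneL l
  | zero => simp
  | add a b _ _ ha hb => simp [map_add, ha, hb]
  | smul r a _ ha => simp [map_smul, ha]

variable (hRec : ∀ (l l' : List (Fin 2)) (i j : Fin 2),
      sh (word (l ++ [i])) (word (l' ++ [j])) =
        sh (word (l ++ [i])) (word l') * FreeAlgebra.ι ℚ j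
        + sh (word l) (word (l' ++ [j])) * FreeAlgebra.ι ℚ i)

include hRec

lemma extRec_left (u : H) (x k : Fin 2) (c' : List (Fin 2)) :
    sh (u * FreeAlgebra.ι ℚ x) (word (c' ++ [k])) =
      sh (u * FreeAlgebra.ι ℚ x) (word c') * FreeAlgebra.ι ℚ k
      + sh u (word (c' ++ [k])) * FreeAlgebra.ι ℚ x := by
  induction mem_span_words u using Submodule.span_induction with
  | mem t ht => obtain ⟨l, rfl⟩ := ht; rw [← word_concat]; exact hRec l c' x k
  | zero => simp
  | add a b _ _ ha hb =>
    simp only [add_mul, map_add, LinearMap.add_apply, ha, hb]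
    abel
  | smul r a _ ha =>
    simp only [smul_mul_assoc, map_smul, LinearMap.smul_apply, ha, smul_add]

lemma extRec_right (u : H) (l : List (Fin 2)) (i y : Fin 2) :
    sh (word (l ++ [i])) (u * FreeAlgebra.ι ℚ y) =
      sh (word (l ++ [i])) u * FreeAlgebra.ι ℚ y
      + sh (word l) (u * FreeAlgebra.ι ℚ y) * FreeAlgebra.ι ℚ i := by
  induction mem_span_words u using Submodule.span_induction with
  | mem t ht => obtain ⟨l', rfl⟩ := ht; rw [← word_concat]; exact hRec l l' i y
  | zero => simp
  | add a b _ _ ha hb =>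
    simp only [add_mul, map_add, ha, hb]
    abel
  | smul r a _ ha =>
    simp only [smul_mul_assoc, map_smul, ha, smul_add]

variable (hOneL : ∀ l : List (Fin 2), sh (word []) (word l) = word l)
  (hOneR : ∀ l : List (Fin 2), sh (word l) (word []) = word l)

include hOneL hOneR

lemma wordAssoc : ∀ (n : ℕ) (a b c : List (Fin 2)),
    a.length + b.length + c.length = n →
    sh (sh (word a) (word b)) (word c) = sh (word a) (sh (word b) (word c)) := by
  intro n
  induction n using Nat.strong_induction_on with
  | _ n ih =>
    intro a b c hn
    rcases a.eq_nil_or_concat' with rfl | ⟨a', i, rfl⟩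
    · rw [hOneL b, word_nil, sh_one_left sh hOneL]
    rcases b.eq_nil_or_concat' with rfl | ⟨b', j, rfl⟩
    · rw [hOneR, hOneL]
    rcases c.eq_nil_or_concat' with rfl | ⟨c', k, rfl⟩
    · rw [word_nil, sh_one_right sh hOneR, sh_one_right sh hOneR]
    · -- main case
      have hab := hRec a' b' i j
      have hbc := hRec b' c' j k
      set A := word (a' ++ [i]) with hA
      set B := word (b' ++ [j]) with hB
      set C := word (c' ++ [k]) with hC
      have hL : sh (sh A B) C =
          sh (sh A B) (word c') * FreeAlgebra.ι ℚ k
          + sh (sh A (word b')) C * FreeAlgebra.ι ℚ j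
          + sh (sh (word a') B) C * FreeAlgebra.ι ℚ i := by
        have e : sh (sh A B) (word c') =
            sh (sh A (word b') * FreeAlgebra.ι ℚ j) (word c')
            + sh (sh (word a') B * FreeAlgebra.ι ℚ i) (word c') := by
          rw [hab, map_add, LinearMap.add_apply]
        conv_lhs => rw [hab, map_add, LinearMap.add_apply,
          extRec_left sh hRec _ j k c', extRec_left sh hRec _ i k c']
        rw [e, add_mul]
        abel
      have hR : sh A (sh B C) =
          sh A (sh B (word c')) * FreeAlgebra.ι ℚ k
          + sh A (sh (word b') C) * FreeAlgebra.ι ℚ j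
          + sh (word a') (sh B C) * FreeAlgebra.ι ℚ i := by
        have e : sh (word a') (sh B C) =
            sh (word a') (sh B (word c') * FreeAlgebra.ι ℚ k)
            + sh (word a') (sh (word b') C * FreeAlgebra.ι ℚ j) := by
          rw [hbc, map_add]
        conv_lhs => rw [hbc, map_add,
          extRec_right sh hRec _ a' i k, extRec_right sh hRec _ a' i j]
        rw [e, add_mul]
        abel
      have hlen : a'.length + 1 + (b'.length + 1) + (c'.length + 1) = n := by
        simpa using hn
      have e1 := ih (n - 1) (by omega) (a' ++ [i]) (b' ++ [j]) c' (by simp; omega)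
      have e2 := ih (n - 1) (by omega) (a' ++ [i]) b' (c' ++ [k]) (by simp; omega)
      have e3 := ih (n - 1) (by omega) a' (b' ++ [j]) (c' ++ [k]) (by simp; omega)
      rw [hL, hR, ← hA, ← hB, ← hC] at *
      rw [e1, e2, e3]

lemma shAssoc : ∀ x y z : H, sh (sh x y) z = sh x (sh y z) := by
  have key : ∀ a b c : List (Fin 2),
      sh (sh (word a) (word b)) (word c) = sh (word a) (sh (word b) (word c)) :=
    fun a b c => wordAssoc sh hRec hOneL hOneR _ a b c rfl
  have step1 : ∀ (a b : List (Fin 2)) (z : H),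
      sh (sh (word a) (word b)) z = sh (word a) (sh (word b) z) := by
    intro a b z
    induction mem_span_words z using Submodule.span_induction with
    | mem t ht => obtain ⟨c, rfl⟩ := ht; exact key a b c
    | zero => simp
    | add u v _ _ hu hv => simp [map_add, hu, hv]
    | smul r u _ hu => simp [map_smul, hu]
  have step2 : ∀ (a : List (Fin 2)) (y z : H),
      sh (sh (word a) y) z = sh (word a) (sh y z) := by
    intro a y z
    induction mem_span_words y using Submodule.span_induction with
    | mem t ht => obtain ⟨b, rfl⟩ := ht; exact step1 a b z
    | zero => simp
    | add u v _ _ hu hv => simp [map_add, LinearMap.add_apply, hu, hv]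
    | smul r u _ hu => simp [map_smul, LinearMap.smul_apply, hu]
  intro x y z
  induction mem_span_words x using Submodule.span_induction with
  | mem t ht => obtain ⟨a, rfl⟩ := ht; exact step2 a y z
  | zero => simp
  | add u v _ _ hu hv => simp [map_add, LinearMap.add_apply, hu, hv]
  | smul r u _ hu => simp [map_smul, LinearMap.smul_apply, hu]

lemma extPS_assoc (u v w : PowerSeries H) :
    extPS sh (extPS sh u v) w = extPS sh u (extPS sh v w) := by
  have hA := shAssoc sh hRec hOneL hOneR
  ext n
  simp only [extPS, PowerSeries.coeff_mk, map_sum, LinearMap.sum_apply, hA]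
  rw [Finset.sum_sigma', Finset.sum_sigma']
  apply Finset.sum_nbij' (fun ⟨⟨_i, j⟩, ⟨k, l⟩⟩ ↦ ⟨(k, l + j), (l, j)⟩)
    (fun ⟨⟨i, _j⟩, ⟨k, l⟩⟩ ↦ ⟨(i + k, l), (i, k)⟩) <;>
    aesop (add simp [add_assoc])

end sh

lemma geom_inv : geomE0 * (1 - PowerSeries.C e0 * PowerSeries.X) = 1 := by
  have h : geomE0 * (1 - PowerSeries.C e0 * PowerSeries.X)
      = geomE0 - (geomE0 * PowerSeries.C e0) * PowerSeries.X := by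
    rw [mul_sub, mul_one, mul_assoc]
  rw [h]
  ext n
  cases n with
  | zero => simp [geomE0, PowerSeries.coeff_zero_mul_X]
  | succ m =>
    simp [geomE0, PowerSeries.coeff_succ_mul_X, PowerSeries.coeff_mul_C,
      PowerSeries.coeff_one, pow_succ]

theorem stmt_5
    (sh : H →ₗ[ℚ] H →ₗ[ℚ] H)
    (hOneL : ∀ l : List (Fin 2), sh (word []) (word l) = word l)
    (hOneR : ∀ l : List (Fin 2), sh (word l) (word []) = word l)
    (hRec : ∀ (l l' : List (Fin 2)) (i j : Fin 2),
      sh (word (l ++ [i])) (word (l' ++ [j])) =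
        sh (word (l ++ [i])) (word l') * FreeAlgebra.ι ℚ j
        + sh (word l) (word (l' ++ [j])) * FreeAlgebra.ι ℚ i) :
    ∀ u v w : PowerSeries H,
      shiftSh sh (extPS sh u v) w = shiftSh sh u (shiftSh sh v w) := by
  intro u v w
  unfold shiftSh
  have h1 : geomE0 * ((1 - PowerSeries.C e0 * PowerSeries.X)
      * extPS sh v (geomE0 * w)) = extPS sh v (geomE0 * w) := by
    rw [← mul_assoc, geom_inv, one_mul]
  rw [h1, extPS_assoc sh hRec hOneL hOneR]
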